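/- Let N > 1 be a real number and let a : ℤ² → [0,∞) satisfy a_{(0,0)} = 0 and Σ_{k∈ℤ²} a_k² < ∞. Then the sum Σ over pairs (k₁,k₂) ∈ ℤ²×ℤ² with k₁+k₂ ≠ 0 and k₁−k₂ ≠ 0 of a_{k₁} a_{k₂} ( |k₁+k₂|^{−N−1} + |k₁−k₂|^{−N−1} ) is finite. -/
import Mathlib


open Real

noncomputable section

/-- Euclidean norm of a point of `ℤ²`. -/
def znorm (k : ℤ × ℤ) : ℝ := Real.sqrt ((k.1 : ℝ) ^ 2 + (k.2 : ℝ) ^ 2)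

lemma znorm_nonneg (k : ℤ × ℤ) : 0 ≤ znorm k := Real.sqrt_nonneg _

/-- The truncated kernel. -/
def gker (N : ℝ) (m : ℤ × ℤ) : ℝ := if m ≠ 0 then znorm m ^ (-N - 1) else 0

lemma gker_nonneg (N : ℝ) (m : ℤ × ℤ) : 0 ≤ gker N m := by
  unfold gker
  split
  · exact Real.rpow_nonneg (znorm_nonneg m) _
  · exact le_refl 0

lemma znorm_pos {m : ℤ × ℤ} (hm : m ≠ 0) : 0 < znorm m := by
  have h : (m.1 : ℝ) ^ 2 + (m.2 : ℝ) ^ 2 ≠ 0 := by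
    intro h
    apply hm
    have h1 : (m.1 : ℝ) = 0 ∧ (m.2 : ℝ) = 0 := by
      constructor <;> nlinarith [sq_nonneg (m.1 : ℝ), sq_nonneg (m.2 : ℝ)]
    have : m.1 = 0 := by exact_mod_cast h1.1
    have : m.2 = 0 := by exact_mod_cast h1.2
    exact Prod.ext ‹m.1 = 0› ‹m.2 = 0›
  exact Real.sqrt_pos.mpr (lt_of_le_of_ne (by positivity) (Ne.symm h))

lemma norm_le_znorm (m : ℤ × ℤ) :
    ‖((finTwoArrowEquiv ℤ).symm m : Fin 2 → ℤ)‖ ≤ znorm m := by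
  rw [EisensteinSeries.norm_eq_max_natAbs]
  simp only [finTwoArrowEquiv_symm_apply, Matrix.cons_val_zero, Matrix.cons_val_one,
    Matrix.head_cons]
  rw [Nat.cast_max, max_le_iff]
  have h1 : (↑m.1.natAbs : ℝ) = |(m.1 : ℝ)| := by
    rw [Nat.cast_natAbs]; push_cast; ring
  have h2 : (↑m.2.natAbs : ℝ) = |(m.2 : ℝ)| := by
    rw [Nat.cast_natAbs]; push_cast; ring
  constructor
  · rw [h1, ← Real.sqrt_sq_eq_abs]
    exact Real.sqrt_le_sqrt (by nlinarith [sq_nonneg (m.2 : ℝ)])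
  · rw [h2, ← Real.sqrt_sq_eq_abs]
    exact Real.sqrt_le_sqrt (by nlinarith [sq_nonneg (m.1 : ℝ)])

lemma gker_summable {N : ℝ} (hN : 1 < N) : Summable (gker N) := by
  have hk : (2 : ℝ) < N + 1 := by linarith
  have h := EisensteinSeries.summable_one_div_norm_rpow hk
  have h2 : Summable fun m : ℤ × ℤ =>
      ‖((finTwoArrowEquiv ℤ).symm m : Fin 2 → ℤ)‖ ^ (-(N + 1)) :=
    (finTwoArrowEquiv ℤ).symm.summable_iff.mpr h
  refine h2.of_nonneg_of_le (gker_nonneg N) fun m => ?_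
  unfold gker
  split
  · rename_i hm
    have h1 : (0 : ℝ) < ‖((finTwoArrowEquiv ℤ).symm m : Fin 2 → ℤ)‖ := by
      rw [norm_pos_iff]
      simp only [finTwoArrowEquiv_symm_apply, ne_eq]
      intro h
      apply hm
      have h0 := congrFun h 0
      have h1' := congrFun h 1
      simp at h0 h1'
      exact Prod.ext h0 h1'
    have : -N - 1 = -(N + 1) := by ring
    rw [this]
    exact Real.rpow_le_rpow_of_nonpos h1 (norm_le_znorm m) (by linarith)
  · exact Real.rpow_nonneg (norm_nonneg _) _

set_option maxHeartbeats 1000000 in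
theorem square_summable_interactions
    (N : ℝ) (hN : 1 < N) (a : ℤ × ℤ → ℝ)
    (ha_nonneg : ∀ k, 0 ≤ a k) (ha0 : a (0, 0) = 0)
    (ha_sq : Summable fun k => a k ^ 2) :
    Summable fun p : (ℤ × ℤ) × (ℤ × ℤ) =>
      if p.1 + p.2 ≠ 0 ∧ p.1 - p.2 ≠ 0 then
        a p.1 * a p.2 * (znorm (p.1 + p.2) ^ (-N - 1) + znorm (p.1 - p.2) ^ (-N - 1))
      else 0 := by
  have hg := gker_summable hN
  have hgn := gker_nonneg N
  have han : ∀ k, 0 ≤ a k ^ 2 := fun k => sq_nonneg _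
  -- base summable on product
  have base : Summable fun q : (ℤ × ℤ) × (ℤ × ℤ) => a q.1 ^ 2 * gker N q.2 :=
    ha_sq.mul_of_nonneg hg han hgn
  -- equivs
  let e1 : ((ℤ × ℤ) × (ℤ × ℤ)) ≃ ((ℤ × ℤ) × (ℤ × ℤ)) :=
    ⟨fun p => (p.1, p.1 + p.2), fun q => (q.1, q.2 - q.1),
      fun p => by simp, fun q => by simp⟩
  let e2 : ((ℤ × ℤ) × (ℤ × ℤ)) ≃ ((ℤ × ℤ) × (ℤ × ℤ)) :=
    ⟨fun p => (p.1, p.1 - p.2), fun q => (q.1, q.1 - q.2),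
      fun p => by simp, fun q => by simp⟩
  let e3 : ((ℤ × ℤ) × (ℤ × ℤ)) ≃ ((ℤ × ℤ) × (ℤ × ℤ)) :=
    ⟨fun p => (p.2, p.1 + p.2), fun q => (q.2 - q.1, q.1),
      fun p => by simp, fun q => by simp⟩
  let e4 : ((ℤ × ℤ) × (ℤ × ℤ)) ≃ ((ℤ × ℤ) × (ℤ × ℤ)) :=
    ⟨fun p => (p.2, p.1 - p.2), fun q => (q.2 + q.1, q.1),
      fun p => by simp, fun q => by abel_nf; simp⟩
  have h1 : Summable fun p : (ℤ × ℤ) × (ℤ × ℤ) => a p.1 ^ 2 * gker N (p.1 + p.2) :=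
    (base.comp_injective e1.injective).congr fun p => rfl
  have h2 : Summable fun p : (ℤ × ℤ) × (ℤ × ℤ) => a p.1 ^ 2 * gker N (p.1 - p.2) :=
    (base.comp_injective e2.injective).congr fun p => rfl
  have h3 : Summable fun p : (ℤ × ℤ) × (ℤ × ℤ) => a p.2 ^ 2 * gker N (p.1 + p.2) :=
    (base.comp_injective e3.injective).congr fun p => rfl
  have h4 : Summable fun p : (ℤ × ℤ) × (ℤ × ℤ) => a p.2 ^ 2 * gker N (p.1 - p.2) :=
    (base.comp_injective e4.injective).congr fun p => rfl
  have hsum : Summable fun p : (ℤ × ℤ) × (ℤ × ℤ) =>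
      (a p.1 ^ 2 * gker N (p.1 + p.2) + a p.1 ^ 2 * gker N (p.1 - p.2)
        + a p.2 ^ 2 * gker N (p.1 + p.2) + a p.2 ^ 2 * gker N (p.1 - p.2)) / 2 :=
    (((h1.add h2).add h3).add h4).div_const 2
  refine hsum.of_nonneg_of_le (fun p => ?_) (fun p => ?_)
  · split
    · exact mul_nonneg (mul_nonneg (ha_nonneg p.1) (ha_nonneg p.2))
        (add_nonneg (Real.rpow_nonneg (znorm_nonneg _) _) (Real.rpow_nonneg (znorm_nonneg _) _))
    · exact le_refl 0
  · split
    · rename_i hp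
      have hgs : gker N (p.1 + p.2) = znorm (p.1 + p.2) ^ (-N - 1) := if_pos hp.1
      have hgd : gker N (p.1 - p.2) = znorm (p.1 - p.2) ^ (-N - 1) := if_pos hp.2
      rw [← hgs, ← hgd]
      have hab : a p.1 * a p.2 ≤ (a p.1 ^ 2 + a p.2 ^ 2) / 2 := by nlinarith [sq_nonneg (a p.1 - a p.2)]
      have hGnn : 0 ≤ gker N (p.1 + p.2) + gker N (p.1 - p.2) := add_nonneg (hgn _) (hgn _)
      calc a p.1 * a p.2 * (gker N (p.1 + p.2) + gker N (p.1 - p.2))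
          ≤ (a p.1 ^ 2 + a p.2 ^ 2) / 2 * (gker N (p.1 + p.2) + gker N (p.1 - p.2)) :=
            mul_le_mul_of_nonneg_right hab hGnn
        _ = (a p.1 ^ 2 * gker N (p.1 + p.2) + a p.1 ^ 2 * gker N (p.1 - p.2)
            + a p.2 ^ 2 * gker N (p.1 + p.2) + a p.2 ^ 2 * gker N (p.1 - p.2)) / 2 := by ring
    · refine div_nonneg ?_ (by norm_num)
      have h1 := mul_nonneg (sq_nonneg (a p.1)) (hgn (p.1 + p.2))
      have h2 := mul_nonneg (sq_nonneg (a p.1)) (hgn (p.1 - p.2))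
      have h3 := mul_nonneg (sq_nonneg (a p.2)) (hgn (p.1 + p.2))
      have h4 := mul_nonneg (sq_nonneg (a p.2)) (hgn (p.1 - p.2))
      linarith
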